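/- arXiv:2501.17204 — 4 statements merged into one kernel-verified Lean document; each statement's English description precedes it below -/
import Mathlib

section
/- Suppose a, Φ : ℝ → ℝ are twice differentiable, a(t) > 0 for all t, K and B are real constants, and (a, Φ) satisfy the string background system, i.e. for all t: (E1) -3·a''(t)/a(t) + (-Φ''(t) - 3·(a'(t)/a(t))·Φ'(t)) - 2·Φ'(t)² = 0, and (E2) -2·a(t)·a''(t) + 2·a'(t)² + 2K - B/(2·a(t)⁴·e^{4Φ(t)}) - 2·Φ'(t)²·a(t)² = 0. Then for any real constant L, the dilaton beta function βΦ(t) = -22 + (3/2)·L·e^{-2Φ(t)}·[2·Φ'(t)² - 6·a'(t)²/a(t)² - 6·K/a(t)² + B/(2·a(t)⁶·e^{4Φ(t)})] is constant in t. -/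
/-- On solutions of the string background system (E1), (E2),
the dilaton beta function is constant in `t`. -/
theorem dilaton_beta_constant (a Φ : ℝ → ℝ) (K B : ℝ)
    (ha : Differentiable ℝ a) (ha' : Differentiable ℝ (deriv a))
    (hΦ : Differentiable ℝ Φ) (hΦ' : Differentiable ℝ (deriv Φ))
    (hpos : ∀ t, 0 < a t)
    (hE1 : ∀ t, -3 * deriv (deriv a) t / a t +
      (-(deriv (deriv Φ) t) - 3 * (deriv a t / a t) * deriv Φ t) - 2 * (deriv Φ t) ^ 2 = 0)
    (hE2 : ∀ t, -2 * a t * deriv (deriv a) t + 2 * (deriv a t) ^ 2 + 2 * K -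
      B / (2 * (a t) ^ 4 * Real.exp (4 * Φ t)) - 2 * (deriv Φ t) ^ 2 * (a t) ^ 2 = 0)
    (L : ℝ) :
    ∀ t s : ℝ,
      -22 + (3 / 2) * L * Real.exp (-2 * Φ t) *
        (2 * (deriv Φ t) ^ 2 - 6 * (deriv a t) ^ 2 / (a t) ^ 2 - 6 * K / (a t) ^ 2 +
          B / (2 * (a t) ^ 6 * Real.exp (4 * Φ t))) =
      -22 + (3 / 2) * L * Real.exp (-2 * Φ s) *
        (2 * (deriv Φ s) ^ 2 - 6 * (deriv a s) ^ 2 / (a s) ^ 2 - 6 * K / (a s) ^ 2 +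
          B / (2 * (a s) ^ 6 * Real.exp (4 * Φ s))) := by
  set f : ℝ → ℝ := fun t => Real.exp (-2 * Φ t) *
      (2 * (deriv Φ t) ^ 2 - 6 * (deriv a t) ^ 2 / (a t) ^ 2 - 6 * K / (a t) ^ 2 +
        B / (2 * (a t) ^ 6 * Real.exp (4 * Φ t))) with hf
  have key : ∀ t, HasDerivAt f 0 t := by
    intro t
    have hA : a t ≠ 0 := (hpos t).ne'
    have hA2 : (a t) ^ 2 ≠ 0 := pow_ne_zero _ hA
    have hEY : Real.exp (4 * Φ t) ≠ 0 := (Real.exp_pos _).ne'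
    have hden : 2 * (a t) ^ 6 * Real.exp (4 * Φ t) ≠ 0 := by positivity
    have h1 : HasDerivAt a (deriv a t) t := (ha t).hasDerivAt
    have h2 : HasDerivAt (deriv a) (deriv (deriv a) t) t := (ha' t).hasDerivAt
    have h3 : HasDerivAt Φ (deriv Φ t) t := (hΦ t).hasDerivAt
    have h4 : HasDerivAt (deriv Φ) (deriv (deriv Φ) t) t := (hΦ' t).hasDerivAt
    have g1 : HasDerivAt (fun x => Real.exp (-2 * Φ x))
        (Real.exp (-2 * Φ t) * (-2 * deriv Φ t)) t := (h3.const_mul (-2)).exp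
    have b1 : HasDerivAt (fun x => 2 * (deriv Φ x) ^ 2)
        (2 * ((2 : ℕ) * deriv Φ t ^ 1 * deriv (deriv Φ) t)) t := (h4.pow 2).const_mul 2
    have b2 : HasDerivAt (fun x => 6 * (deriv a x) ^ 2 / (a x) ^ 2)
        ((6 * ((2 : ℕ) * deriv a t ^ 1 * deriv (deriv a) t) * (a t) ^ 2 -
          6 * (deriv a t) ^ 2 * ((2 : ℕ) * a t ^ 1 * deriv a t)) / ((a t) ^ 2) ^ 2) t :=
      ((h2.pow 2).const_mul 6).div (h1.pow 2) hA2
    have b3 : HasDerivAt (fun x => 6 * K / (a x) ^ 2)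
        ((0 * (a t) ^ 2 - 6 * K * ((2 : ℕ) * a t ^ 1 * deriv a t)) / ((a t) ^ 2) ^ 2) t :=
      (hasDerivAt_const t (6 * K)).div (h1.pow 2) hA2
    have hd : HasDerivAt (fun x => 2 * (a x) ^ 6 * Real.exp (4 * Φ x))
        (2 * ((6 : ℕ) * a t ^ 5 * deriv a t) * Real.exp (4 * Φ t) +
          2 * (a t) ^ 6 * (Real.exp (4 * Φ t) * (4 * deriv Φ t))) t :=
      ((h1.pow 6).const_mul 2).mul (h3.const_mul 4).exp
    have b4 : HasDerivAt (fun x => B / (2 * (a x) ^ 6 * Real.exp (4 * Φ x)))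
        ((0 * (2 * (a t) ^ 6 * Real.exp (4 * Φ t)) -
          B * (2 * ((6 : ℕ) * a t ^ 5 * deriv a t) * Real.exp (4 * Φ t) +
            2 * (a t) ^ 6 * (Real.exp (4 * Φ t) * (4 * deriv Φ t)))) /
          (2 * (a t) ^ 6 * Real.exp (4 * Φ t)) ^ 2) t :=
      (hasDerivAt_const t B).div hd hden
    have hbr := ((b1.sub b2).sub b3).add b4
    have H := g1.mul hbr
    convert H using 1
    case e'_4 => rfl
    case e'_5 => rfl
    case e'_8 => rfl
    -- express Φ'' and B from the field equations
    have e1 := hE1 t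
    have e2 := hE2 t
    have hP2 : deriv (deriv Φ) t = -3 * deriv (deriv a) t / a t -
        3 * (deriv a t / a t) * deriv Φ t - 2 * (deriv Φ t) ^ 2 := by
      field_simp at e1 ⊢
      linarith
    have hB : B = (-2 * a t * deriv (deriv a) t + 2 * (deriv a t) ^ 2 + 2 * K -
        2 * (deriv Φ t) ^ 2 * (a t) ^ 2) * (2 * (a t) ^ 4 * Real.exp (4 * Φ t)) := by
      have h24 : 2 * (a t) ^ 4 * Real.exp (4 * Φ t) ≠ 0 := by positivity
      field_simp at e2
      field_simp
      linarith
    simp only [Pi.add_apply, Pi.sub_apply]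
    rw [hP2, hB]
    field_simp
    ring
  have hconst := is_const_of_deriv_eq_zero (fun t => (key t).differentiableAt)
    (fun t => (key t).deriv)
  intro t s
  have := hconst t s
  simp only [hf] at this
  linear_combination (3 / 2 * L) * this
end

section
/- Let a₀ > 0 and Φ₀ be real numbers. Set K = -1, B = -4·a₀⁴·e^{4Φ₀}, and L = (11/3)·a₀²·e^{2Φ₀}. Then the constant functions a(t) = a₀ and Φ(t) = Φ₀ satisfy the string background system: (E1) -3·a''/a + (-Φ'' - 3·(a'/a)·Φ') - 2·Φ'² = 0 and (E2) -2·a·a'' + 2·a'² + 2K - B/(2·a⁴·e^{4Φ}) - 2·Φ'²·a² = 0 hold for all t, and moreover the dilaton beta function βΦ(t) = -22 + (3/2)·L·e^{-2Φ(t)}·[2·Φ'(t)² - 6·a'(t)²/a(t)² - 6·K/a(t)² + B/(2·a(t)⁶·e^{4Φ(t)})] vanishes identically. -/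
/-- The anti-Einstein static universe. With `K = -1`,
`B = -4·a₀⁴·e^{4Φ₀}` and `L = (11/3)·a₀²·e^{2Φ₀}`, the constant functions
`a = a₀`, `Φ = Φ₀` satisfy the string background system (E1), (E2) and the
dilaton beta function vanishes identically. -/
theorem antiEinstein_static_universe (a₀ Φ₀ : ℝ) (ha₀ : 0 < a₀)
    (K B L : ℝ) (hK : K = -1) (hB : B = -4 * a₀ ^ 4 * Real.exp (4 * Φ₀))
    (hL : L = (11 / 3) * a₀ ^ 2 * Real.exp (2 * Φ₀))
    (a Φ : ℝ → ℝ) (haf : a = fun _ : ℝ => a₀) (hΦf : Φ = fun _ : ℝ => Φ₀) :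
    (∀ t, -3 * deriv (deriv a) t / a t +
      (-(deriv (deriv Φ) t) - 3 * (deriv a t / a t) * deriv Φ t) - 2 * (deriv Φ t) ^ 2 = 0) ∧
    (∀ t, -2 * a t * deriv (deriv a) t + 2 * (deriv a t) ^ 2 + 2 * K -
      B / (2 * (a t) ^ 4 * Real.exp (4 * Φ t)) - 2 * (deriv Φ t) ^ 2 * (a t) ^ 2 = 0) ∧
    (∀ t, -22 + (3 / 2) * L * Real.exp (-2 * Φ t) *
      (2 * (deriv Φ t) ^ 2 - 6 * (deriv a t) ^ 2 / (a t) ^ 2 - 6 * K / (a t) ^ 2 +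
        B / (2 * (a t) ^ 6 * Real.exp (4 * Φ t))) = 0) := by
  subst haf hΦf hK hB hL
  have hexp4 := Real.exp_ne_zero (4 * Φ₀)
  have ha := ha₀.ne'
  refine ⟨fun t => by simp, fun t => ?_, fun t => ?_⟩
  · simp only [deriv_const']
    field_simp
    ring
  · simp only [deriv_const']
    have h : Real.exp (-(2 * Φ₀)) * Real.exp (2 * Φ₀) = 1 := by
      rw [← Real.exp_add]; norm_num
    field_simp
    linear_combination 88 * h
end

section
/- Let a₀ > 0, Φ₀ be real numbers, let K ∈ {-1, 0, 1}, let L > 0, and set B = 4·a₀⁴·e^{4Φ₀}·K (so that the constant functions a = a₀, Φ = Φ₀ satisfy the string background system). If the value βΦ = -22 - 6·K·L·e^{-2Φ₀}/a₀² of the dilaton beta function equals 0, then K = -1, L = (11/3)·a₀²·e^{2Φ₀}, and B = -4·a₀⁴·e^{4Φ₀} < 0. -/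
/-- Uniqueness of the anti-Einstein static universe. If the
constant value `-22 - 6·K·L·e^{-2Φ₀}/a₀²` of the dilaton beta function on the
static solution with `B = 4·a₀⁴·e^{4Φ₀}·K` vanishes, then `K = -1`,
`L = (11/3)·a₀²·e^{2Φ₀}`, and `B = -4·a₀⁴·e^{4Φ₀} < 0`. -/
theorem antiEinstein_uniqueness (a₀ Φ₀ K L B : ℝ) (ha₀ : 0 < a₀)
    (hK : K = -1 ∨ K = 0 ∨ K = 1) (hL : 0 < L)
    (hB : B = 4 * a₀ ^ 4 * Real.exp (4 * Φ₀) * K)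
    (hβΦ : -22 - 6 * K * L * Real.exp (-2 * Φ₀) / a₀ ^ 2 = 0) :
    K = -1 ∧ L = (11 / 3) * a₀ ^ 2 * Real.exp (2 * Φ₀) ∧
      B = -4 * a₀ ^ 4 * Real.exp (4 * Φ₀) ∧ B < 0 := by
  have he : (0:ℝ) < Real.exp (-2 * Φ₀) := Real.exp_pos _
  have ha2 : (0:ℝ) < a₀ ^ 2 := by positivity
  have hKm : K = -1 := by
    rcases hK with h | h | h
    · exact h
    · exfalso; rw [h] at hβΦ; norm_num at hβΦ
    · exfalso; rw [h] at hβΦ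
      have : 0 < 6 * 1 * L * Real.exp (-2 * Φ₀) / a₀ ^ 2 := by positivity
      linarith
  subst hKm
  have hLe : L * Real.exp (-2 * Φ₀) = 22 / 6 * a₀ ^ 2 := by
    rw [show (-2 : ℝ) * Φ₀ = -(2 * Φ₀) by ring]
    field_simp at hβΦ
    linarith
  have hLeq : L = (11 / 3) * a₀ ^ 2 * Real.exp (2 * Φ₀) := by
    have h2 : Real.exp (-2 * Φ₀) * Real.exp (2 * Φ₀) = 1 := by
      rw [← Real.exp_add]; ring_nf; exact Real.exp_zero
    have := congrArg (· * Real.exp (2 * Φ₀)) hLe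
    calc L = L * (Real.exp (-2 * Φ₀) * Real.exp (2 * Φ₀)) := by rw [h2]; ring
    _ = 22 / 6 * a₀ ^ 2 * Real.exp (2 * Φ₀) := by rw [← mul_assoc, hLe]
    _ = (11 / 3) * a₀ ^ 2 * Real.exp (2 * Φ₀) := by ring
  refine ⟨rfl, hLeq, by rw [hB]; ring, ?_⟩
  rw [hB]
  have : 0 < 4 * a₀ ^ 4 * Real.exp (4 * Φ₀) := by positivity
  linarith
end

section
/- Let a, Φ : ℝ → ℝ be twice differentiable with a(t) > 0 for all t, and let K, B be real constants. Suppose (a, Φ) satisfy the string background system: (E1) -3·a''/a + (-Φ'' - 3·(a'/a)·Φ') - 2·Φ'² = 0 and (E2) -2·a·a'' + 2·a'² + 2K - B/(2·a⁴·e^{4Φ}) - 2·Φ'²·a² = 0 for all t. Then for all t, the derivative of the function t ↦ 2·Φ'(t)² - 6·a'(t)²/a(t)² - 6·K/a(t)² + B/(2·a(t)⁶·e^{4Φ(t)}) equals -12·Φ'(t)·a'(t)²/a(t)² - 12·K·Φ'(t)/a(t)² + B·Φ'(t)/(a(t)⁶·e^{4Φ(t)}) + 4·Φ'(t)³. -/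
/-- On solutions of the string background system, the derivative
of the bracket `2·Φ'² - 6·a'²/a² - 6·K/a² + B/(2·a⁶·e^{4Φ})` equals
`-12·Φ'·a'²/a² - 12·K·Φ'/a² + B·Φ'/(a⁶·e^{4Φ}) + 4·Φ'³`. -/
theorem bracket_derivative_formula (a Φ : ℝ → ℝ) (K B : ℝ)
    (ha : Differentiable ℝ a) (ha' : Differentiable ℝ (deriv a))
    (hΦ : Differentiable ℝ Φ) (hΦ' : Differentiable ℝ (deriv Φ))
    (hpos : ∀ t, 0 < a t)
    (hE1 : ∀ t, -3 * deriv (deriv a) t / a t +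
      (-(deriv (deriv Φ) t) - 3 * (deriv a t / a t) * deriv Φ t) -
      2 * (deriv Φ t) ^ 2 = 0)
    (hE2 : ∀ t, -2 * a t * deriv (deriv a) t + 2 * (deriv a t) ^ 2 + 2 * K -
      B / (2 * (a t) ^ 4 * Real.exp (4 * Φ t)) -
      2 * (deriv Φ t) ^ 2 * (a t) ^ 2 = 0) :
    ∀ t : ℝ,
      deriv (fun s => 2 * (deriv Φ s) ^ 2 - 6 * (deriv a s) ^ 2 / (a s) ^ 2 -
        6 * K / (a s) ^ 2 + B / (2 * (a s) ^ 6 * Real.exp (4 * Φ s))) t =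
      -12 * deriv Φ t * (deriv a t) ^ 2 / (a t) ^ 2 -
        12 * K * deriv Φ t / (a t) ^ 2 +
        B * deriv Φ t / ((a t) ^ 6 * Real.exp (4 * Φ t)) +
        4 * (deriv Φ t) ^ 3 := by
  intro t
  have hat : a t ≠ 0 := (hpos t).ne'
  have hE : Real.exp (4 * Φ t) ≠ 0 := Real.exp_ne_zero _
  have hA := (ha t).hasDerivAt
  have hA' := (ha' t).hasDerivAt
  have hP := (hΦ t).hasDerivAt
  have hP' := (hΦ' t).hasDerivAt
  have hexp : HasDerivAt (fun s => Real.exp (4 * Φ s))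
      (Real.exp (4 * Φ t) * (4 * deriv Φ t)) t := by
    simpa [mul_comm, Function.comp_def] using (Real.hasDerivAt_exp (4 * Φ t)).comp t ((hP.const_mul 4))
  have hden := ((hA.pow 6).const_mul 2).mul hexp
  have hdenne : 2 * (a t) ^ 6 * Real.exp (4 * Φ t) ≠ 0 := by positivity
  have ha2 : (a t) ^ 2 ≠ 0 := pow_ne_zero _ hat
  have h1 := (hP'.pow 2).const_mul 2
  have h2 := ((hA'.pow 2).const_mul 6).div (hA.pow 2) ha2
  have h3 := (hasDerivAt_const t (6 * K)).div (hA.pow 2) ha2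
  have h4 := (hasDerivAt_const t B).div hden hdenne
  have htot := ((h1.sub h2).sub h3).add h4
  rw [show deriv (fun s => 2 * (deriv Φ s) ^ 2 - 6 * (deriv a s) ^ 2 / (a s) ^ 2 -
        6 * K / (a s) ^ 2 + B / (2 * (a s) ^ 6 * Real.exp (4 * Φ s))) t = _ from htot.deriv]
  simp only [Pi.pow_apply, Pi.mul_apply]
  have e1 := hE1 t
  have e2 := hE2 t
  field_simp at e1 e2 ⊢
  linear_combination (-8 * deriv Φ t * (a t) ^ 11 * Real.exp (4 * Φ t)) * e1 +
    (6 * deriv a t + 6 * deriv Φ t * a t) * (a t) ^ 5 * e2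
end
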